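/- Let m > 3, t > 2, and A₁,...,A_t be nonempty pairwise disjoint subsets of [m], D = ∪ P_{A_i}. Then |D| = (Σ_{i=1}^t q^{|A_i|} − t)/(q−1) ≤ (q^{m−1} − q)/(q−1), and consequently C_{D^c} has (2,q)-locality. -/

import Mathlib

set_option linter.unusedSectionVars false
set_option linter.unusedVariables false
set_option maxHeartbeats 1000000

open Matrix Finset

/-- Points of `PG(m-1,q)`: nonzero vectors whose first nonzero coordinate is `1`. -/
def projPoints (F : Type*) [Field F] [Fintype F] [DecidableEq F] (m : ℕ) :
    Finset (Fin m → F) :=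
  Finset.univ.filter fun v => ∃ i, v i = 1 ∧ ∀ j, j < i → v j = 0

/-- `P_A`: projective points supported on `A`. -/
def PA (F : Type*) [Field F] [Fintype F] [DecidableEq F] {m : ℕ} (A : Finset (Fin m)) :
    Finset (Fin m → F) :=
  (projPoints F m).filter fun v => ∀ i ∉ A, v i = 0

section NRM
variable {F : Type*} [Field F] [Fintype F] [DecidableEq F] {m : ℕ}

def nzS (v : Fin m → F) : Finset (Fin m) := univ.filter (fun i => v i ≠ 0)

lemma mem_nzS {v : Fin m → F} {i : Fin m} : i ∈ nzS v ↔ v i ≠ 0 := by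
  simp [nzS]

lemma nzS_nonempty {v : Fin m → F} (hv : v ≠ 0) : (nzS v).Nonempty := by
  rw [Function.ne_iff] at hv
  obtain ⟨i, hi⟩ := hv
  exact ⟨i, mem_nzS.2 hi⟩

noncomputable def nrm (v : Fin m → F) : Fin m → F :=
  if h : (nzS v).Nonempty then (v ((nzS v).min' h))⁻¹ • v else 0

lemma nrm_eq {v : Fin m → F} (hv : v ≠ 0) :
    nrm v = (v ((nzS v).min' (nzS_nonempty hv)))⁻¹ • v := by
  rw [nrm, dif_pos (nzS_nonempty hv)]

lemma nrm_mem_projPoints {v : Fin m → F} (hv : v ≠ 0) : nrm v ∈ projPoints F m := by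
  have hne := nzS_nonempty hv
  set i := (nzS v).min' hne with hi
  have hvi : v i ≠ 0 := mem_nzS.1 ((nzS v).min'_mem hne)
  rw [nrm_eq hv, projPoints, mem_filter]
  refine ⟨mem_univ _, i, ?_, ?_⟩
  · simp [inv_mul_cancel₀ hvi]; exact inv_mul_cancel₀ hvi
  · intro j hj
    have : v j = 0 := by
      by_contra h
      exact absurd ((nzS v).min'_le j (mem_nzS.2 h)) (by omega)
    simp [this]

lemma nrm_projPoint {p : Fin m → F} (hp : p ∈ projPoints F m) : nrm p = p := by
  rw [projPoints, mem_filter] at hp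
  obtain ⟨-, i, hi1, hi0⟩ := hp
  have hpne : p ≠ 0 := fun h => by simp [h] at hi1
  have hne := nzS_nonempty hpne
  have hmin : (nzS p).min' hne = i := by
    refine le_antisymm ((nzS p).min'_le i (mem_nzS.2 (by simp [hi1]))) ?_
    by_contra h
    push_neg at h
    exact absurd (hi0 _ h) (mem_nzS.1 ((nzS p).min'_mem hne))
  rw [nrm_eq hpne, hmin, hi1]
  simp

lemma nrm_smul {v : Fin m → F} {c : F} (hc : c ≠ 0) : nrm (c • v) = nrm v := by
  by_cases hv : v = 0
  · simp [hv]
  have hcv : c • v ≠ 0 := smul_ne_zero hc hv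
  have hnz : nzS (c • v) = nzS v := by
    ext i; simp [mem_nzS, hc]
  rw [nrm_eq hcv, nrm_eq hv]
  have : (nzS (c • v)).min' (nzS_nonempty hcv) = (nzS v).min' (nzS_nonempty hv) := by
    congr 1
  rw [this]
  have hvi : v ((nzS v).min' (nzS_nonempty hv)) ≠ 0 := mem_nzS.1 ((nzS v).min'_mem _)
  simp only [Pi.smul_apply, smul_eq_mul, mul_inv, smul_smul]
  congr 1
  field_simp

lemma exists_smul_nrm {v : Fin m → F} (hv : v ≠ 0) : ∃ c : F, c ≠ 0 ∧ v = c • nrm v := by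
  have hne := nzS_nonempty hv
  set i := (nzS v).min' hne
  have hvi : v i ≠ 0 := mem_nzS.1 ((nzS v).min'_mem hne)
  exact ⟨v i, hvi, by rw [nrm_eq hv, smul_smul, mul_inv_cancel₀ hvi, one_smul]⟩

lemma projPoints_ne_zero {p : Fin m → F} (hp : p ∈ projPoints F m) : p ≠ 0 := by
  rw [projPoints, mem_filter] at hp
  obtain ⟨-, i, hi1, -⟩ := hp
  intro h; simp [h] at hi1

lemma proj_smul_eq {p p' : Fin m → F} (hp : p ∈ projPoints F m) (hp' : p' ∈ projPoints F m)
    {c : F} (hc : c ≠ 0) (h : p = c • p') : p = p' := by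
  rw [← nrm_projPoint hp, h, nrm_smul hc, nrm_projPoint hp']

lemma count_proj (Q : (Fin m → F) → Prop) [DecidablePred Q]
    (hQ : ∀ (c : F), c ≠ 0 → ∀ v, Q v → Q (c • v)) :
    (univ.filter fun v => v ≠ 0 ∧ Q v).card
      = ((projPoints F m).filter Q).card * (Fintype.card F - 1) := by
  rw [Finset.card_eq_sum_card_fiberwise (f := nrm)
    (t := (projPoints F m).filter Q) (by
      intro v hv
      rw [mem_coe, mem_filter] at hv ⊢
      obtain ⟨-, hv0, hvQ⟩ := hv
      obtain ⟨c, hc, hcv⟩ := exists_smul_nrm hv0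
      refine ⟨nrm_mem_projPoints hv0, ?_⟩
      have : Q (c⁻¹ • v) := hQ c⁻¹ (inv_ne_zero hc) v hvQ
      rwa [hcv, smul_smul, inv_mul_cancel₀ hc, one_smul] at this)]
  rw [Finset.sum_congr rfl (g := fun _ => Fintype.card F - 1), Finset.sum_const, smul_eq_mul]
  intro p hp
  rw [mem_filter] at hp
  obtain ⟨hpP, hpQ⟩ := hp
  have hp0 : p ≠ 0 := projPoints_ne_zero hpP
  have : ((univ.filter fun v => v ≠ 0 ∧ Q v).filter fun v => nrm v = p)
      = (univ.filter fun c : F => c ≠ 0).image (fun c => c • p) := by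
    ext v
    simp only [mem_filter, mem_univ, true_and, mem_image]
    constructor
    · rintro ⟨⟨hv0, -⟩, hvp⟩
      obtain ⟨c, hc, hcv⟩ := exists_smul_nrm hv0
      exact ⟨c, hc, by rw [hcv, hvp]⟩
    · rintro ⟨c, hc, rfl⟩
      exact ⟨⟨smul_ne_zero hc hp0, hQ c hc p hpQ⟩, by rw [nrm_smul hc, nrm_projPoint hpP]⟩
  rw [this, Finset.card_image_of_injOn, filter_ne', Finset.card_erase_of_mem (mem_univ _),
    Finset.card_univ]
  intro c hc c' hc' h
  obtain ⟨i, hi⟩ := Function.ne_iff.1 hp0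
  have := congrFun h i
  simp only [Pi.smul_apply, smul_eq_mul] at this
  exact mul_right_cancel₀ hi this

lemma card_supported (A : Finset (Fin m)) :
    (univ.filter fun v : Fin m → F => ∀ i ∉ A, v i = 0).card = Fintype.card F ^ A.card := by
  have : (univ.filter fun v : Fin m → F => ∀ i ∉ A, v i = 0)
      = Fintype.piFinset (fun i => if i ∈ A then (univ : Finset F) else {0}) := by
    ext v
    simp only [mem_filter, mem_univ, true_and, Fintype.mem_piFinset]
    constructor
    · intro h i
      by_cases hi : i ∈ A <;> simp [hi, h]
    · intro h i hi
      have := h i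
      simpa [hi] using this
  rw [this, Fintype.card_piFinset]
  rw [show (fun i => (if i ∈ A then (univ : Finset F) else {0}).card)
      = fun i => (if i ∈ A then Fintype.card F else 1) from funext fun i => by
        by_cases hi : i ∈ A <;> simp [hi]]
  rw [Finset.prod_ite_mem, Finset.univ_inter, Finset.prod_const]

lemma PA_card (A : Finset (Fin m)) :
    (PA F A).card * (Fintype.card F - 1) = Fintype.card F ^ A.card - 1 := by
  rw [PA, ← count_proj _ (by intro c hc v hv i hi; simp [hv i hi])]
  have h0 : (0 : Fin m → F) ∈ univ.filter fun v : Fin m → F => ∀ i ∉ A, v i = 0 := by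
    simp
  have : (univ.filter fun v : Fin m → F => v ≠ 0 ∧ ∀ i ∉ A, v i = 0)
      = (univ.filter fun v : Fin m → F => ∀ i ∉ A, v i = 0).erase 0 := by
    ext v
    simp only [mem_filter, mem_univ, true_and, mem_erase]
  rw [this, Finset.card_erase_of_mem h0, card_supported]

lemma projPoints_card :
    (projPoints F m).card * (Fintype.card F - 1) = Fintype.card F ^ m - 1 := by
  have := PA_card (F := F) (univ : Finset (Fin m))
  rw [PA] at this
  rw [Finset.filter_true_of_mem (by intro v hv i hi; exact absurd (mem_univ i) hi)] at this
  rwa [Finset.card_univ, Fintype.card_fin] at this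

def lineF (F : Type*) [Field F] [Fintype F] [DecidableEq F] {m : ℕ} (g h : Fin m → F) :
    Finset (Fin m → F) :=
  (projPoints F m).filter fun v => ∃ a b : F, v = a • g + b • h

variable {g h : Fin m → F}

lemma indep2 (hg : g ∈ projPoints F m) (hh : h ∈ projPoints F m) (hgh : g ≠ h)
    {a b : F} (hab : a • g + b • h = 0) : a = 0 ∧ b = 0 := by
  have hb : b = 0 := by
    by_contra hb
    have hhg : h = (-a * b⁻¹) • g := by
      have : b • h = -a • g := by
        rw [neg_smul]
        rw [← sub_eq_zero] at hab ⊢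
        rw [← hab]; ring
      have := congrArg (fun v => b⁻¹ • v) this
      simpa [smul_smul, inv_mul_cancel₀ hb, mul_comm, mul_assoc] using this
    have hc : (-a * b⁻¹) ≠ 0 := by
      intro h0
      exact projPoints_ne_zero hh (by rw [hhg, h0, zero_smul])
    exact hgh ((proj_smul_eq hh hg hc hhg)).symm
  refine ⟨?_, hb⟩
  rw [hb, zero_smul, add_zero] at hab
  by_contra ha
  exact projPoints_ne_zero hg (by
    have := congrArg (fun v => a⁻¹ • v) hab
    simpa [smul_smul, inv_mul_cancel₀ ha] using this)

lemma lineF_card (hg : g ∈ projPoints F m) (hh : h ∈ projPoints F m) (hgh : g ≠ h) :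
    (lineF F g h).card * (Fintype.card F - 1) = Fintype.card F ^ 2 - 1 := by
  rw [lineF, ← count_proj _ (by
    rintro c hc v ⟨a, b, rfl⟩
    exact ⟨c * a, c * b, by rw [smul_add, smul_smul, smul_smul]⟩)]
  have himg : (univ.filter fun v : Fin m → F => v ≠ 0 ∧ ∃ a b : F, v = a • g + b • h)
      = ((univ : Finset (F × F)).erase 0).image (fun p => p.1 • g + p.2 • h) := by
    ext v
    simp only [mem_filter, mem_univ, true_and, mem_image, mem_erase]
    constructor
    · rintro ⟨hv0, a, b, rfl⟩
      refine ⟨(a, b), ⟨?_, trivial⟩, rfl⟩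
      intro h0
      rw [Prod.ext_iff] at h0
      obtain ⟨h1, h2⟩ := h0
      simp only at h1 h2
      rw [h1, h2] at hv0
      simp at hv0
    · rintro ⟨⟨a, b⟩, ⟨hab0, -⟩, rfl⟩
      refine ⟨?_, a, b, rfl⟩
      intro h0
      obtain ⟨ha, hb⟩ := indep2 hg hh hgh h0
      exact hab0 (by simp_all [Prod.ext_iff])
  rw [himg, Finset.card_image_of_injOn (by
    rintro ⟨a, b⟩ - ⟨a', b'⟩ - hab
    have : (a - a') • g + (b - b') • h = 0 := by
      rw [sub_smul, sub_smul]
      rw [← sub_eq_zero] at hab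
      rw [← hab]; ring
    obtain ⟨h1, h2⟩ := indep2 hg hh hgh this
    have : a = a' := by rwa [sub_eq_zero] at h1
    have : b = b' := by rwa [sub_eq_zero] at h2
    simp_all [Prod.ext_iff]),
    Finset.card_erase_of_mem (mem_univ _), Finset.card_univ, Fintype.card_prod, sq]

lemma mem_lineF (hg : g ∈ projPoints F m) : g ∈ lineF F g h := by
  rw [lineF, mem_filter]
  exact ⟨hg, 1, 0, by simp⟩

lemma lineF_hyper (hg : g ∈ projPoints F m) (hh : h ∈ projPoints F m) (hgh : g ≠ h)
    (hcard : (lineF F g h).card = Fintype.card F + 1)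
    (x : Fin m → F) (hx : ∃ d ∈ lineF F g h, x ⬝ᵥ d ≠ 0) :
    Fintype.card F ≤ ((lineF F g h).filter fun d => x ⬝ᵥ d ≠ 0).card := by
  have hdot : ∀ a b : F, x ⬝ᵥ (a • g + b • h) = a * (x ⬝ᵥ g) + b * (x ⬝ᵥ h) := by
    intro a b
    rw [dotProduct_add, dotProduct_smul, dotProduct_smul, smul_eq_mul, smul_eq_mul]
  have huw : x ⬝ᵥ g ≠ 0 ∨ x ⬝ᵥ h ≠ 0 := by
    by_contra hc
    push_neg at hc
    obtain ⟨d, hd, hxd⟩ := hx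
    rw [lineF, mem_filter] at hd
    obtain ⟨-, a, b, rfl⟩ := hd
    rw [hdot, hc.1, hc.2] at hxd
    simp at hxd
  have hzero : ((lineF F g h).filter fun d => x ⬝ᵥ d = 0).card ≤ 1 := by
    rw [Finset.card_le_one]
    intro d₁ hd₁ d₂ hd₂
    rw [mem_filter, lineF, mem_filter] at hd₁ hd₂
    obtain ⟨⟨hd₁P, a₁, b₁, rfl⟩, hx₁⟩ := hd₁
    obtain ⟨⟨hd₂P, a₂, b₂, rfl⟩, hx₂⟩ := hd₂
    rw [hdot] at hx₁ hx₂
    have hne₁ : ¬(a₁ = 0 ∧ b₁ = 0) := by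
      rintro ⟨rfl, rfl⟩
      exact projPoints_ne_zero hd₁P (by simp)
    have hne₂ : ¬(a₂ = 0 ∧ b₂ = 0) := by
      rintro ⟨rfl, rfl⟩
      exact projPoints_ne_zero hd₂P (by simp)
    rcases huw with hu | hw
    · set u := x ⬝ᵥ g
      set w := x ⬝ᵥ h
      have ha₁ : a₁ = -(b₁ * w) * u⁻¹ := by field_simp; linear_combination hx₁
      have ha₂ : a₂ = -(b₂ * w) * u⁻¹ := by field_simp; linear_combination hx₂
      have hb₁ : b₁ ≠ 0 := by
        intro h0; rw [h0] at ha₁; simp at ha₁; exact hne₁ ⟨ha₁, h0⟩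
      have hb₂ : b₂ ≠ 0 := by
        intro h0; rw [h0] at ha₂; simp at ha₂; exact hne₂ ⟨ha₂, h0⟩
      have hc : b₂ * b₁⁻¹ ≠ 0 := mul_ne_zero hb₂ (inv_ne_zero hb₁)
      have hsm : a₂ • g + b₂ • h = (b₂ * b₁⁻¹) • (a₁ • g + b₁ • h) := by
        rw [smul_add, smul_smul, smul_smul]
        congr 2
        · rw [ha₁, ha₂]; field_simp
        · field_simp
      exact (proj_smul_eq hd₂P hd₁P hc hsm).symm ▸ rfl
    · set u := x ⬝ᵥ g
      set w := x ⬝ᵥ h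
      have hb₁ : b₁ = -(a₁ * u) * w⁻¹ := by field_simp; linear_combination hx₁
      have hb₂ : b₂ = -(a₂ * u) * w⁻¹ := by field_simp; linear_combination hx₂
      have ha₁ : a₁ ≠ 0 := by
        intro h0; rw [h0] at hb₁; simp at hb₁; exact hne₁ ⟨h0, hb₁⟩
      have ha₂ : a₂ ≠ 0 := by
        intro h0; rw [h0] at hb₂; simp at hb₂; exact hne₂ ⟨h0, hb₂⟩
      have hc : a₂ * a₁⁻¹ ≠ 0 := mul_ne_zero ha₂ (inv_ne_zero ha₁)
      have hsm : a₂ • g + b₂ • h = (a₂ * a₁⁻¹) • (a₁ • g + b₁ • h) := by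
        rw [smul_add, smul_smul, smul_smul]
        congr 2
        · field_simp
        · rw [hb₁, hb₂]; field_simp
      exact (proj_smul_eq hd₂P hd₁P hc hsm).symm ▸ rfl
  have hsplit := Finset.card_filter_add_card_filter_not
    (s := lineF F g h) (p := fun d => x ⬝ᵥ d = 0)
  simp only [ne_eq]
  omega

end NRM

lemma merge_pow {q a b : ℕ} (hq : 2 ≤ q) (ha : 1 ≤ a) (hb : 1 ≤ b) :
    q ^ a + q ^ b ≤ q ^ (a + b - 1) + q := by
  obtain ⟨a', rfl⟩ : ∃ a', a = a' + 1 := ⟨a - 1, by omega⟩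
  obtain ⟨b', rfl⟩ : ∃ b', b = b' + 1 := ⟨b - 1, by omega⟩
  have h1 : 1 ≤ q ^ a' := Nat.one_le_pow _ _ (by omega)
  have h2 : 1 ≤ q ^ b' := Nat.one_le_pow _ _ (by omega)
  have key : q ^ a' + q ^ b' ≤ q ^ a' * q ^ b' + 1 := by nlinarith
  have : a' + 1 + (b' + 1) - 1 = a' + b' + 1 := by omega
  rw [this]
  calc q ^ (a' + 1) + q ^ (b' + 1) = q * (q ^ a' + q ^ b') := by ring
    _ ≤ q * (q ^ a' * q ^ b' + 1) := Nat.mul_le_mul_left _ key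
    _ = q ^ (a' + b' + 1) + q := by ring

lemma merged_pow {ι : Type*} {q : ℕ} (hq : 2 ≤ q) (s : Finset ι) (a : ι → ℕ)
    (hs : s.Nonempty) (ha : ∀ i ∈ s, 1 ≤ a i) :
    ∑ i ∈ s, q ^ a i ≤ q ^ (∑ i ∈ s, a i - (s.card - 1)) + (s.card - 1) * q := by
  induction hs using Finset.Nonempty.cons_induction with
  | singleton i => simp
  | cons i s hi hs ih =>
    have hcard : s.card ≤ ∑ j ∈ s, a j := by
      calc s.card = ∑ _j ∈ s, 1 := by simp
        _ ≤ ∑ j ∈ s, a j := Finset.sum_le_sum (fun j hj => ha j (Finset.mem_cons.2 (Or.inr hj)))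
    have hc1 : 1 ≤ s.card := Finset.card_pos.2 hs
    rw [Finset.sum_cons, Finset.sum_cons, Finset.card_cons]
    have hai : 1 ≤ a i := ha i (Finset.mem_cons_self ..)
    have ih' := ih (fun j hj => ha j (Finset.mem_cons.2 (Or.inr hj)))
    have hb : 1 ≤ ∑ j ∈ s, a j - (s.card - 1) := by omega
    calc q ^ a i + ∑ j ∈ s, q ^ a j
        ≤ q ^ a i + (q ^ (∑ j ∈ s, a j - (s.card - 1)) + (s.card - 1) * q) := by omega
      _ = (q ^ a i + q ^ (∑ j ∈ s, a j - (s.card - 1))) + (s.card - 1) * q := by ring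
      _ ≤ (q ^ (a i + (∑ j ∈ s, a j - (s.card - 1)) - 1) + q) + (s.card - 1) * q :=
          Nat.add_le_add_right (merge_pow hq hai hb) _
      _ = q ^ (a i + ∑ j ∈ s, a j - (s.card + 1 - 1)) + (s.card + 1 - 1) * q := by
          have he : a i + (∑ j ∈ s, a j - (s.card - 1)) - 1
              = a i + ∑ j ∈ s, a j - (s.card + 1 - 1) := by omega
          have hml : (s.card - 1) * q + q = (s.card + 1 - 1) * q := by
            have h' : s.card + 1 - 1 = (s.card - 1) + 1 := by omega
            rw [h', Nat.add_mul, one_mul]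
          rw [he]; omega

lemma le_two_pow_sub_two : ∀ n, 4 ≤ n → n ≤ 2 ^ (n - 2) := by
  intro n hn
  induction n with
  | zero => omega
  | succ k ih =>
    rcases Nat.lt_or_ge k 4 with h | h
    · have hk : k = 3 := by omega
      subst hk; norm_num
    · have := ih (by omega)
      have h2 : 2 ^ (k - 2) ≤ 2 ^ (k + 1 - 2) := Nat.pow_le_pow_right (by omega) (by omega)
      have h3 : 2 ^ (k - 2) + 2 ^ (k - 2) = 2 ^ (k - 1) := by
        rw [← Nat.two_mul, ← Nat.pow_succ']
        congr 1; omega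
      have h4 : 2 ^ (k - 1) = 2 ^ (k + 1 - 2) := by congr 1
      omega

lemma key_ineq {q m t : ℕ} (hq : 2 ≤ q) (hm : 4 ≤ m) (ht : 3 ≤ t) (a : Fin t → ℕ)
    (ha : ∀ i, 1 ≤ a i) (hsum : ∑ i, a i ≤ m) :
    (∑ i, q ^ a i) + q ≤ q ^ (m - 1) + t := by
  have hcard : (univ : Finset (Fin t)).card = t := by simp
  have htS : t ≤ ∑ i, a i := by
    calc t = ∑ _i : Fin t, 1 := by simp
      _ ≤ ∑ i, a i := Finset.sum_le_sum fun i _ => ha i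
  have h1 := merged_pow hq univ a ⟨⟨0, by omega⟩, mem_univ _⟩ (fun i _ => ha i)
  rw [hcard] at h1
  have h2 : q ^ (∑ i, a i - (t - 1)) ≤ q ^ (m - 2) :=
    Nat.pow_le_pow_right (by omega) (by omega)
  have h3 : t ≤ q ^ (m - 2) := by
    calc t ≤ m := le_trans htS hsum
      _ ≤ 2 ^ (m - 2) := le_two_pow_sub_two m hm
      _ ≤ q ^ (m - 2) := Nat.pow_le_pow_left hq _
  have h4 : q ^ (m - 2) * q = q ^ (m - 1) := by
    rw [← Nat.pow_succ]; congr 1; omega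
  have h5 : q ^ (m - 2) + t * q ≤ q ^ (m - 1) + t := by
    obtain ⟨r, rfl⟩ : ∃ r, q = r + 2 := ⟨q - 2, by omega⟩
    nlinarith [Nat.mul_le_mul_right r h3]
  calc (∑ i, q ^ a i) + q ≤ (q ^ (∑ i, a i - (t - 1)) + (t - 1) * q) + q := by omega
    _ ≤ q ^ (m - 2) + ((t - 1) * q + q) := by omega
    _ = q ^ (m - 2) + t * q := by
        obtain ⟨t', rfl⟩ : ∃ t', t = t' + 1 := ⟨t - 1, by omega⟩
        simp [Nat.add_mul]
    _ ≤ q ^ (m - 1) + t := h5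

/-- For `m > 3`, `t > 2` and `A_i` nonempty pairwise disjoint,
`|D| = (Σ q^{|A_i|} - t)/(q-1) ≤ (q^{m-1}-q)/(q-1)`, and hence `C_{D^c}` has `(2,q)`-locality. -/
theorem stmt11 {F : Type*} [Field F] [Fintype F] [DecidableEq F] {m t q : ℕ}
    (hq : Fintype.card F = q) (hm : 3 < m) (ht : 2 < t)
    (A : Fin t → Finset (Fin m)) (hne : ∀ i, (A i).Nonempty)
    (hdisj : ∀ i j, i ≠ j → Disjoint (A i) (A j)) :
    let D := Finset.univ.biUnion fun i => PA F (A i)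
    let Dc := projPoints F m \ D
    D.card = ((∑ i, q ^ (A i).card) - t) / (q - 1) ∧
    D.card ≤ (q ^ (m - 1) - q) / (q - 1) ∧
    ∀ g ∈ Dc, ∃ R : Finset (Fin m → F),
      R ⊆ Dc ∧ g ∈ R ∧ R.card ≤ q + 1 ∧
      ∀ x : Fin m → F, (∃ d ∈ R, x ⬝ᵥ d ≠ 0) →
        q ≤ (R.filter fun d => x ⬝ᵥ d ≠ 0).card := by
  intro D Dc
  have hq2 : 2 ≤ q := hq ▸ Fintype.one_lt_card
  have hq1 : 0 < q - 1 := by omega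
  -- basic facts
  have hPAdisj : ∀ i ∈ (univ : Finset (Fin t)), ∀ j ∈ (univ : Finset (Fin t)), i ≠ j →
      Disjoint (PA F (A i)) (PA F (A j)) := by
    rintro i - j - hij
    rw [Finset.disjoint_left]
    intro v hvi hvj
    rw [PA, mem_filter] at hvi hvj
    obtain ⟨hvP, hvi⟩ := hvi
    obtain ⟨-, hvj⟩ := hvj
    rw [projPoints, mem_filter] at hvP
    obtain ⟨-, k, hk1, -⟩ := hvP
    have hki : k ∈ A i := by
      by_contra hk; exact one_ne_zero (hk1 ▸ hvi k hk)
    have hkj : k ∈ A j := by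
      by_contra hk; exact one_ne_zero (hk1 ▸ hvj k hk)
    exact Finset.disjoint_left.1 (hdisj i j hij) hki hkj
  have hDcard : D.card * (q - 1) = (∑ i, q ^ (A i).card) - t := by
    show (univ.biUnion fun i => PA F (A i)).card * (q - 1) = _
    rw [Finset.card_biUnion hPAdisj, Finset.sum_mul]
    have h1 : ∀ i ∈ (univ : Finset (Fin t)), (PA F (A i)).card * (q - 1)
        = q ^ (A i).card - 1 := fun i _ => by rw [← hq]; exact PA_card (A i)
    rw [Finset.sum_congr rfl h1]
    have h2 : ∑ i, q ^ (A i).card = (∑ i, (q ^ (A i).card - 1)) + t := by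
      have : ∀ i ∈ (univ : Finset (Fin t)), q ^ (A i).card = (q ^ (A i).card - 1) + 1 :=
        fun i _ => by have := Nat.one_le_pow (A i).card q (by omega); omega
      rw [Finset.sum_congr rfl this, Finset.sum_add_distrib]
      simp
    omega
  -- sum of sizes bounded by m
  have hsum_le : ∑ i, (A i).card ≤ m := by
    have := Finset.card_biUnion (s := (univ : Finset (Fin t))) (t := A)
      (fun i _ j _ hij => hdisj i j hij)
    calc ∑ i, (A i).card = (univ.biUnion A).card := this.symm
      _ ≤ Fintype.card (Fin m) := Finset.card_le_univ _
      _ = m := Fintype.card_fin m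
  have hkey : (∑ i, q ^ (A i).card) + q ≤ q ^ (m - 1) + t :=
    key_ineq hq2 (by omega) (by omega) (fun i => (A i).card)
      (fun i => Finset.card_pos.2 (hne i)) hsum_le
  have hDle : D.card * (q - 1) ≤ q ^ (m - 1) - q := by
    rw [hDcard]; omega
  refine ⟨?_, ?_, ?_⟩
  · refine (Nat.div_eq_of_eq_mul_left hq1 ?_).symm
    rw [← hDcard]
  · rw [Nat.le_div_iff_mul_le hq1]; exact hDle
  · -- locality
    intro g hg
    have hg' : g ∈ projPoints F m \ D := hg
    rw [mem_sdiff] at hg'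
    obtain ⟨hgP, hgD⟩ := hg'
    have hDsub : D ⊆ projPoints F m := by
      intro p hp
      rw [Finset.mem_biUnion] at hp
      obtain ⟨i, -, hp⟩ := hp
      exact Finset.filter_subset _ _ hp
    have hq21 : (q + 1) * (q - 1) = q ^ 2 - 1 := by
      obtain ⟨r, rfl⟩ : ∃ r, q = r + 2 := ⟨q - 2, by omega⟩
      have h1 : r + 2 - 1 = r + 1 := by omega
      have h2 : (r + 2) ^ 2 = (r + 2 + 1) * (r + 1) + 1 := by ring
      rw [h1, h2]
      omega
    have hline_card : ∀ p ∈ projPoints F m, g ≠ p → (lineF F g p).card = q + 1 := by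
      intro p hp hgp
      have := lineF_card hgP hp hgp
      rw [hq] at this
      exact Nat.eq_of_mul_eq_mul_right hq1 (by rw [this, hq21])
    -- blocked points
    set Blocked : Finset (Fin m → F) := D.biUnion (fun p => (lineF F g p).erase g) with hB
    have hBcard : Blocked.card ≤ D.card * q := by
      calc Blocked.card ≤ ∑ p ∈ D, ((lineF F g p).erase g).card := Finset.card_biUnion_le
        _ ≤ ∑ p ∈ D, q := by
            refine Finset.sum_le_sum fun p hp => ?_
            have hpP := hDsub hp
            have hgp : g ≠ p := fun h => hgD (h ▸ hp)
            rw [Finset.card_erase_of_mem (mem_lineF hgP), hline_card p hpP hgp]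
            omega
        _ = D.card * q := by rw [Finset.sum_const, smul_eq_mul]
    have hPcard : (projPoints F m).card * (q - 1) = q ^ m - 1 := by
      rw [← hq]; exact projPoints_card
    -- D.card * q + 1 < projPoints.card
    have hlt : D.card * q + 1 < (projPoints F m).card := by
      have hqm2 : q ^ 2 ≤ q ^ m := Nat.pow_le_pow_right (by omega) (by omega)
      have hq2q : 2 * q ≤ q ^ 2 := by
        rw [sq]; exact Nat.mul_le_mul_right q hq2
      have hmul : (D.card * q + 1) * (q - 1) < (projPoints F m).card * (q - 1) := by
        rw [hPcard]
        calc (D.card * q + 1) * (q - 1) = (D.card * (q - 1)) * q + (q - 1) := by ring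
          _ ≤ (q ^ (m - 1) - q) * q + (q - 1) := by
              have := Nat.mul_le_mul_right q hDle; omega
          _ = (q ^ (m - 1) * q - q * q) + (q - 1) := by rw [Nat.sub_mul]
          _ = (q ^ m - q ^ 2) + (q - 1) := by
              congr 2
              · rw [← Nat.pow_succ]; congr 1; omega
              · rw [sq]
          _ < q ^ m - 1 := by omega
      exact Nat.lt_of_mul_lt_mul_right hmul
    have hins : (insert g Blocked).card < (projPoints F m).card := by
      calc (insert g Blocked).card ≤ Blocked.card + 1 := Finset.card_insert_le _ _
        _ ≤ D.card * q + 1 := by omega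
        _ < _ := hlt
    have hnsub : ¬ (projPoints F m ⊆ insert g Blocked) := fun hsub =>
      absurd (Finset.card_le_card hsub) (by omega)
    rw [Finset.not_subset] at hnsub
    obtain ⟨h, hhP, hh'⟩ := hnsub
    have hhg : h ≠ g := fun he => hh' (by rw [he]; exact Finset.mem_insert_self _ _)
    have hhB : h ∉ Blocked := fun he => hh' (Finset.mem_insert_of_mem he)
    have hgh : g ≠ h := Ne.symm hhg
    refine ⟨lineF F g h, ?_, mem_lineF hgP, ?_, ?_⟩
    · -- lineF ⊆ Dc
      intro v hv
      have hvP : v ∈ projPoints F m := Finset.filter_subset _ _ hv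
      show v ∈ projPoints F m \ D
      rw [mem_sdiff]
      refine ⟨hvP, fun hvD => ?_⟩
      rw [lineF, mem_filter] at hv
      obtain ⟨-, a, b, rfl⟩ := hv
      have hv0 : a • g + b • h ≠ 0 := projPoints_ne_zero hvP
      have hvg : a • g + b • h ≠ g := fun he => hgD (he ▸ hvD)
      have hb0 : b ≠ 0 := by
        intro hb
        rw [hb, zero_smul, add_zero] at hvP hvD hv0 hvg
        have ha0 : a ≠ 0 := fun ha => hv0 (by rw [ha, zero_smul])
        exact hvg (proj_smul_eq hvP hgP ha0 rfl)
      -- h ∈ lineF g v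
      have hhline : h ∈ lineF F g (a • g + b • h) := by
        rw [lineF, mem_filter]
        refine ⟨hhP, -a * b⁻¹, b⁻¹, ?_⟩
        rw [smul_add, smul_smul, smul_smul]
        rw [← add_assoc, ← add_smul]
        field_simp
        simp
      have : h ∈ Blocked := by
        rw [hB, Finset.mem_biUnion]
        exact ⟨a • g + b • h, hvD, Finset.mem_erase.2 ⟨hhg, hhline⟩⟩
      exact hhB this
    · rw [hline_card h hhP hgh]
    · intro x hx
      have := lineF_hyper hgP hhP hgh (by rw [hline_card h hhP hgh, hq]) x hx
      rwa [hq] at this
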